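/- Let (k, ⟨·,·⟩) be a finite-dimensional real Lie algebra with a flat left-invariant metric, with orthogonal decomposition k = z ⊕ h ⊕ k' as in Milnor's theorem (z the center, h and k' = [k,k] abelian, ad : h → so(k') injective). If D is a skew-symmetric derivation of k, then D vanishes on h. -/

import Mathlib

/-- Let `(k, ⟨·,·⟩)` be a flat Lie algebra with orthogonal Milnor
decomposition `k = z ⊕ h ⊕ k'` (`z` the center, `h` and `k' = [k,k]` abelian,
`ad : h → so(k')` injective). Any skew-symmetric derivation `D` of `k`
vanishes on `h`. -/
theorem skew_derivation_vanishes_on_h {k : Type*} [LieRing k] [LieAlgebra ℝ k]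
    [Module.Finite ℝ k]
    (B : k →ₗ[ℝ] k →ₗ[ℝ] ℝ)
    (hsymm : ∀ x y : k, B x y = B y x)
    (hpos : ∀ x : k, x ≠ 0 → 0 < B x x)
    (z h k' : Submodule ℝ k)
    (hz : ∀ x : k, x ∈ z ↔ ∀ y : k, ⁅x, y⁆ = 0)
    (hk' : ∀ x : k, x ∈ k' ↔ x ∈ LieAlgebra.derivedSeries ℝ k 1)
    (hhab : ∀ x ∈ h, ∀ y ∈ h, ⁅x, y⁆ = (0 : k))
    (hk'ab : ∀ x ∈ k', ∀ y ∈ k', ⁅x, y⁆ = (0 : k))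
    (hspan : z ⊔ h ⊔ k' = ⊤)
    (horth₁ : ∀ x ∈ z, ∀ y ∈ h, B x y = 0)
    (horth₂ : ∀ x ∈ z, ∀ y ∈ k', B x y = 0)
    (horth₃ : ∀ x ∈ h, ∀ y ∈ k', B x y = 0)
    (hadinv : ∀ H ∈ h, ∀ y ∈ k', ⁅H, y⁆ ∈ k')
    (hadskew : ∀ H ∈ h, ∀ y w : k, B ⁅H, y⁆ w = - B y ⁅H, w⁆)
    (hadinj : ∀ H ∈ h, (∀ y ∈ k', ⁅H, y⁆ = (0 : k)) → H = 0)
    (D : k →ₗ[ℝ] k)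
    (hder : ∀ x y : k, D ⁅x, y⁆ = ⁅D x, y⁆ + ⁅x, D y⁆)
    (hDskew : ∀ x y : k, B (D x) y = - B x (D y)) :
    ∀ H ∈ h, D H = 0 := by
  classical
  -- `B x x = 0 → x = 0`
  have hdef : ∀ x : k, B x x = 0 → x = 0 := by
    intro x hx
    by_contra hne
    exact (hpos x hne).ne' hx
  have hnonneg : ∀ x : k, 0 ≤ B x x := by
    intro x
    rcases eq_or_ne x 0 with rfl | hne
    · simp
    · exact (hpos x hne).le
  -- D preserves the center
  have hDz : ∀ x ∈ z, D x ∈ z := by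
    intro x hx
    rw [hz] at hx ⊢
    intro y
    have h1 := hder x y
    rw [hx y, map_zero, hx (D y), add_zero] at h1
    exact h1.symm
  -- D preserves k' = [k,k]
  have hDk' : ∀ x ∈ k', D x ∈ k' := by
    intro x hx
    rw [hk'] at hx ⊢
    have hds : LieAlgebra.derivedSeries ℝ k 1 = ⁅(⊤ : LieIdeal ℝ k), (⊤ : LieIdeal ℝ k)⁆ := by
      rw [LieAlgebra.derivedSeries_def, LieAlgebra.derivedSeriesOfIdeal_succ,
        LieAlgebra.derivedSeriesOfIdeal_zero]
    have hmemiff : ∀ w : k, w ∈ LieAlgebra.derivedSeries ℝ k 1 ↔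
        w ∈ Submodule.span ℝ
          {m : k | ∃ a ∈ (⊤ : LieIdeal ℝ k), ∃ b ∈ (⊤ : LieIdeal ℝ k), ⁅a, b⁆ = m} := by
      intro w
      rw [hds, ← LieSubmodule.mem_toSubmodule, LieSubmodule.lieIdeal_oper_eq_linear_span']
    rw [hmemiff] at hx ⊢
    refine Submodule.span_induction ?_ ?_ ?_ ?_ hx
    · rintro m ⟨a, -, b, -, rfl⟩
      rw [hder a b]
      exact Submodule.add_mem _
        (Submodule.subset_span ⟨D a, trivial, b, trivial, rfl⟩)
        (Submodule.subset_span ⟨a, trivial, D b, trivial, rfl⟩)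
    · simp
    · intro a b _ _ ha hb; rw [map_add]; exact Submodule.add_mem _ ha hb
    · intro r a _ ha; rw [map_smul]; exact Submodule.smul_mem _ r ha
  intro H hH
  -- D H is orthogonal to z and to k'
  have hperpz : ∀ x ∈ z, B (D H) x = 0 := by
    intro x hx
    rw [hDskew H x, hsymm, horth₁ (D x) (hDz x hx) H hH, neg_zero]
  have hperpk' : ∀ x ∈ k', B (D H) x = 0 := by
    intro x hx
    rw [hDskew H x, horth₃ H hH (D x) (hDk' x hx), neg_zero]
  -- hence D H ∈ h
  have hH1 : D H ∈ h := by
    have htop : D H ∈ z ⊔ h ⊔ k' := by rw [hspan]; trivial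
    rcases Submodule.mem_sup.mp htop with ⟨u, hu, c, hc, huc⟩
    rcases Submodule.mem_sup.mp hu with ⟨a, ha, b, hb, hab⟩
    have hDH : D H = a + b + c := by rw [hab, huc]
    have hw : a + c = 0 := by
      apply hdef
      have hacb : a + c = D H - b := by rw [hDH]; abel
      have e1 : B (D H) (a + c) = 0 := by
        rw [map_add, hperpz a ha, hperpk' c hc, add_zero]
      have e2 : B b (a + c) = 0 := by
        rw [map_add, hsymm b a, horth₁ a ha b hb, horth₃ b hb c hc, add_zero]
      calc B (a + c) (a + c) = B (D H - b) (a + c) := by rw [← hacb]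
        _ = B (D H) (a + c) - B b (a + c) := by
            rw [map_sub, LinearMap.sub_apply]
        _ = 0 := by rw [e1, e2, sub_zero]
    have : D H = b := by
      rw [hDH]
      have : a + b + c = b + (a + c) := by abel
      rw [this, hw, add_zero]
    rw [this]; exact hb
  set H1 := D H with hH1def
  -- the adjoint maps
  set A : Module.End ℝ k := LieAlgebra.ad ℝ k H1 with hA
  set E : Module.End ℝ k := LieAlgebra.ad ℝ k H with hE
  have hAx : ∀ x : k, A x = ⁅H1, x⁆ := fun x => rfl
  -- A = [D, E]
  have hAeq : A = D * E - E * D := by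
    ext x
    have h1 := hder H x
    simp only [LinearMap.sub_apply, Module.End.mul_apply]
    rw [hAx x]
    show ⁅D H, x⁆ = D ⁅H, x⁆ - ⁅H, D x⁆
    rw [h1]; abel
  -- E and A commute
  have hEA : E * A = A * E := by
    ext x
    simp only [Module.End.mul_apply]
    show ⁅H, ⁅H1, x⁆⁆ = ⁅H1, ⁅H, x⁆⁆
    have := leibniz_lie H H1 x
    rw [hhab H hH H1 hH1, zero_lie] at this
    rw [this, zero_add]
  -- trace of A² is zero
  have htr : LinearMap.trace ℝ k (A * A) = 0 := by
    have h1 : A * A = D * (E * A) - E * (D * A) := by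
      rw [hAeq]; noncomm_ring
    rw [h1, map_sub]
    rw [LinearMap.trace_mul_comm ℝ E (D * A)]
    have h2 : D * A * E = D * (A * E) := mul_assoc _ _ _
    have h3 : D * (E * A) = D * (A * E) := by rw [hEA]
    rw [h2, h3, sub_self]
  -- A is skew-symmetric w.r.t. B
  have hAskew : ∀ y w : k, B (A y) w = - B y (A w) := by
    intro y w
    rw [hAx, hAx]
    exact hadskew H1 hH1 y w
  -- set up the inner product space structure coming from B
  letI C : InnerProductSpace.Core ℝ k :=
    { inner := fun x y => B x y
      conj_inner_symm := fun x y => by simpa using hsymm y x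
      re_inner_nonneg := fun x => by simpa using hnonneg x
      definite := fun x hx => hdef x (by simpa using hx)
      add_left := fun x y w => by simp
      smul_left := fun x y r => by simp }
  letI : NormedAddCommGroup k := C.toNormedAddCommGroup
  letI : InnerProductSpace ℝ k := InnerProductSpace.ofCore C.toCore
  have : FiniteDimensional ℝ k := ‹Module.Finite ℝ k›
  let b := stdOrthonormalBasis ℝ k
  have hinner : ∀ x y : k, (inner ℝ x y : ℝ) = B x y := fun x y => rfl
  -- compute the trace of A² in the orthonormal basis
  have htr2 : LinearMap.trace ℝ k (A * A) = ∑ i, B (b i) (A (A (b i))) := by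
    rw [LinearMap.trace_eq_matrix_trace ℝ b.toBasis (A * A), Matrix.trace]
    congr 1
    ext i
    rw [Matrix.diag_apply, LinearMap.toMatrix_apply, OrthonormalBasis.coe_toBasis,
      OrthonormalBasis.coe_toBasis_repr_apply, OrthonormalBasis.repr_apply_apply]
    rfl
  -- each diagonal term is -‖A bᵢ‖², so all A bᵢ vanish
  have hterm : ∀ i, B (b i) (A (A (b i))) = - B (A (b i)) (A (b i)) := by
    intro i
    rw [hsymm, hAskew (A (b i)) (b i), hsymm (A (b i)) (A (b i))]
  have hzero : ∀ i, A (b i) = 0 := by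
    have hsum : ∑ i, B (A (b i)) (A (b i)) = 0 := by
      have := htr2.symm.trans htr
      calc ∑ i, B (A (b i)) (A (b i))
          = - ∑ i, B (b i) (A (A (b i))) := by
            rw [← Finset.sum_neg_distrib]
            exact Finset.sum_congr rfl fun i _ => by rw [hterm i, neg_neg]
        _ = 0 := by rw [this, neg_zero]
    intro i
    apply hdef
    have := (Finset.sum_eq_zero_iff_of_nonneg
      (fun j _ => hnonneg (A (b j)))).mp hsum i (Finset.mem_univ i)
    exact this
  have hAzero : A = 0 := by
    apply b.toBasis.ext
    intro i
    rw [OrthonormalBasis.coe_toBasis]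
    simpa using hzero i
  -- conclude using injectivity of ad on h
  have : H1 = 0 := by
    apply hadinj H1 hH1
    intro y hy
    have : A y = 0 := by rw [hAzero]; rfl
    rwa [hAx] at this
  exact this
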